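/- Let u(t,r) be a C² eikonal function for the spherically symmetric problem, satisfying Lu = 0 where L = ∂ₜ + √(1+Ψ)∂ᵣ, and define μ⁻¹ := ∂ₜu with μ > 0. Then μ satisfies the transport equation L μ = -(1/(4(1+Ψ))) μ (LΨ + L̄Ψ), where L̄ = ∂ₜ - √(1+Ψ)∂ᵣ. -/

import Mathlib

/-- Transport equation for the inverse foliation density: if Lu = 0 and
μ⁻¹ = ∂ₜu with μ > 0, then Lμ = -(1/(4(1+Ψ)))μ(LΨ + L̄Ψ). -/
theorem stmt_13 (Ψ u μ : ℝ × ℝ → ℝ) (hΨ : ContDiff ℝ 2 Ψ) (hu : ContDiff ℝ 2 u)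
    (hpos : ∀ p, -1 < Ψ p)
    (heik : ∀ p, fderiv ℝ u p (1, Real.sqrt (1 + Ψ p)) = 0)
    (hμpos : ∀ p, 0 < μ p)
    (hμ : ∀ p, μ p * fderiv ℝ u p (1, 0) = 1) (p : ℝ × ℝ) :
    fderiv ℝ μ p (1, Real.sqrt (1 + Ψ p))
      = -(1 / (4 * (1 + Ψ p))) * μ p *
        (fderiv ℝ Ψ p (1, Real.sqrt (1 + Ψ p))
          + fderiv ℝ Ψ p (1, -Real.sqrt (1 + Ψ p))) := by
  -- notation
  set g := fderiv ℝ u with hg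
  have hgd : ContDiff ℝ 1 g := hu.fderiv_right (by norm_num)
  set s : ℝ × ℝ → ℝ := fun q => Real.sqrt (1 + Ψ q) with hsdef
  have hposq : ∀ q, (0:ℝ) < 1 + Ψ q := fun q => by linarith [hpos q]
  have hspos : ∀ q, 0 < s q := fun q => Real.sqrt_pos.2 (hposq q)
  have hs2 : s p ^ 2 = 1 + Ψ p := Real.sq_sqrt (hposq p).le
  set a : ℝ × ℝ → ℝ := fun q => g q (1, 0) with hadef
  set b : ℝ × ℝ → ℝ := fun q => g q (0, 1) with hbdef
  -- split of vector (1, t)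
  have hsplit : ∀ (t : ℝ), ((1:ℝ), t) = ((1:ℝ), (0:ℝ)) + t • ((0:ℝ), (1:ℝ)) := by
    intro t; simp [Prod.ext_iff]
  -- eikonal as scalar identity
  have heik' : ∀ q, a q + s q * b q = 0 := by
    intro q
    have key : a q + s q * b q = g q (1, Real.sqrt (1 + Ψ q)) := by
      conv_rhs => rw [show ((1:ℝ), Real.sqrt (1 + Ψ q)) = ((1:ℝ),(0:ℝ)) + s q • ((0:ℝ),(1:ℝ))
        from hsplit _]
      rw [map_add, map_smul, smul_eq_mul]
    rw [key]; exact heik q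
  -- derivatives of a and b
  set H := fderiv ℝ g p with hH
  have hgdq : DifferentiableAt ℝ g p := (hgd.differentiable (by norm_num)) p
  have ha : HasFDerivAt a ((ContinuousLinearMap.apply ℝ ℝ ((1:ℝ),(0:ℝ))).comp H) p :=
    ((ContinuousLinearMap.apply ℝ ℝ ((1:ℝ),(0:ℝ))).hasFDerivAt).comp p hgdq.hasFDerivAt
  have hb : HasFDerivAt b ((ContinuousLinearMap.apply ℝ ℝ ((0:ℝ),(1:ℝ))).comp H) p :=
    ((ContinuousLinearMap.apply ℝ ℝ ((0:ℝ),(1:ℝ))).hasFDerivAt).comp p hgdq.hasFDerivAt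
  have hsymm : ∀ v w, H v w = H w v := hu.contDiffAt.isSymmSndFDerivAt (by simp)
  -- derivative of s
  have hΨd : HasFDerivAt Ψ (fderiv ℝ Ψ p) p :=
    ((hΨ.differentiable (by norm_num)) p).hasFDerivAt
  have h1Ψ : HasFDerivAt (fun q => 1 + Ψ q) (fderiv ℝ Ψ p) p := by
    simpa using hΨd.const_add 1
  have hsd : HasFDerivAt s ((1 / (2 * s p)) • fderiv ℝ Ψ p) p :=
    h1Ψ.sqrt (hposq p).ne'
  -- differentiate the eikonal identity
  have hF : HasFDerivAt (fun q => a q + s q * b q)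
      (((ContinuousLinearMap.apply ℝ ℝ ((1:ℝ),(0:ℝ))).comp H)
        + (s p • ((ContinuousLinearMap.apply ℝ ℝ ((0:ℝ),(1:ℝ))).comp H)
            + b p • ((1 / (2 * s p)) • fderiv ℝ Ψ p))) p :=
    ha.add (hsd.mul hb)
  have hF0 : HasFDerivAt (fun q => a q + s q * b q) (0 : (ℝ × ℝ) →L[ℝ] ℝ) p := by
    have : (fun q => a q + s q * b q) = fun _ => (0:ℝ) := funext heik'
    rw [this]; exact hasFDerivAt_const 0 p
  have hkey := hF.unique hF0
  have hkey1 : H (1,0) (1,0) + (s p * (H (1,0) (0,1))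
      + b p * ((1 / (2 * s p)) * fderiv ℝ Ψ p (1,0))) = 0 := by
    have := congrArg (fun (L : (ℝ × ℝ) →L[ℝ] ℝ) => L ((1:ℝ),(0:ℝ))) hkey
    simpa [ContinuousLinearMap.add_apply, ContinuousLinearMap.smul_apply, smul_eq_mul,
      ContinuousLinearMap.comp_apply, ContinuousLinearMap.apply_apply] using this
  -- L applied to a
  have hLa : fderiv ℝ a p (1, s p) = H (1,0) (1,0) + s p * H (1,0) (0,1) := by
    rw [ha.fderiv]
    have : H (1, s p) (1,0) = H (1,0) (1, s p) := hsymm _ _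
    simp only [ContinuousLinearMap.comp_apply, ContinuousLinearMap.apply_apply]
    rw [this, hsplit (s p), map_add, map_smul, smul_eq_mul]
  -- μ = a⁻¹
  have hane : ∀ q, a q ≠ 0 := by
    intro q h
    have := hμ q
    rw [hadef] at h
    simp [h] at this
  have hμeq : μ = fun q => (a q)⁻¹ := by
    funext q
    exact eq_inv_of_mul_eq_one_left (hμ q)
  have hμd : HasFDerivAt μ ((-((a p) ^ 2)⁻¹) •
      ((ContinuousLinearMap.apply ℝ ℝ ((1:ℝ),(0:ℝ))).comp H)) p := by
    rw [hμeq]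
    exact (hasDerivAt_inv (hane p)).comp_hasFDerivAt p ha
  have hμval : μ p = (a p)⁻¹ := by rw [hμeq]
  -- LHS
  have e1 : H (1, s p) ((1:ℝ),(0:ℝ)) = H (1,0) (1,0) + s p * H (1,0) (0,1) := by
    rw [hsymm]
    conv_lhs => rw [hsplit (s p)]
    rw [map_add, map_smul, smul_eq_mul]
  have hL : fderiv ℝ μ p (1, s p)
      = (-((a p) ^ 2)⁻¹) * (H (1,0) (1,0) + s p * H (1,0) (0,1)) := by
    rw [hμd.fderiv]
    simp only [ContinuousLinearMap.smul_apply, ContinuousLinearMap.comp_apply,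
      ContinuousLinearMap.apply_apply, smul_eq_mul]
    rw [e1]
  -- RHS directional derivatives
  have hR : fderiv ℝ Ψ p (1, Real.sqrt (1 + Ψ p)) + fderiv ℝ Ψ p (1, -Real.sqrt (1 + Ψ p))
      = 2 * fderiv ℝ Ψ p (1, 0) := by
    rw [← map_add]
    have : ((1:ℝ), Real.sqrt (1 + Ψ p)) + (1, -Real.sqrt (1 + Ψ p))
        = (2:ℝ) • ((1:ℝ), (0:ℝ)) := by rw [Prod.mk_add_mk, Prod.smul_mk]; norm_num
    rw [this, map_smul, smul_eq_mul]
  -- b in terms of a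
  have hb_eq : b p = -a p / s p := by
    have h0 := heik' p
    have hsne : s p ≠ 0 := (hspos p).ne'
    field_simp
    linarith
  -- put it together
  rw [hL, hR, hμval]
  have h2 : H (1,0) (1,0) + s p * H (1,0) (0,1)
      = -(b p * ((1 / (2 * s p)) * fderiv ℝ Ψ p (1,0))) := by linarith [hkey1]
  have hsne : s p ≠ 0 := (hspos p).ne'
  have hane' : a p ≠ 0 := hane p
  rw [h2, hb_eq, ← hs2]
  field_simp
  ring
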